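/- Let a < b be reals, n ≥ 1 a natural number, h = (b−a)/(2n), k > 0, θ = k·h, and nodes x_r = a + r·h for r = 0,…,2n. Let ψ : ℝ → ℝ be any function, and let p : [a,b] → ℝ be the piecewise quadratic interpolant of ψ, i.e. on each double panel [x_{2r}, x_{2r+2}] (r = 0,…,n−1), p coincides with the unique polynomial of degree at most 2 that agrees with ψ at x_{2r}, x_{2r+1}, x_{2r+2}. Then Filon_sin(ψ) = ∫_a^b sin(k·x)·p(x) dx. -/

import Mathlib

set_option maxHeartbeats 1000000


open Real Finset

/-- Filon's sine quadrature formula on `[a,b]` with `2n` equal subintervals. -/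
noncomputable def filonSin (a b k : ℝ) (n : ℕ) (ψ : ℝ → ℝ) : ℝ :=
  let h : ℝ := (b - a) / (2 * n)
  let θ : ℝ := k * h
  let x : ℕ → ℝ := fun r => a + r * h
  let α : ℝ := 1 / θ + Real.sin θ * Real.cos θ / θ ^ 2 - 2 * Real.sin θ ^ 2 / θ ^ 3
  let β : ℝ := 2 * ((1 + Real.cos θ ^ 2) / θ ^ 2 - 2 * Real.sin θ * Real.cos θ / θ ^ 3)
  let γ : ℝ := 4 * (Real.sin θ / θ ^ 3 - Real.cos θ / θ ^ 2)
  let Seven : ℝ := (∑ r ∈ Finset.range (n + 1), ψ (x (2 * r)) * Real.sin (k * x (2 * r)))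
      - (ψ a * Real.sin (k * a) + ψ b * Real.sin (k * b)) / 2
  let Sodd : ℝ := ∑ r ∈ Finset.range n, ψ (x (2 * r + 1)) * Real.sin (k * x (2 * r + 1))
  h * (α * (ψ a * Real.cos (k * a) - ψ b * Real.cos (k * b)) + β * Seven + γ * Sodd)

/-- Filon's cosine quadrature formula on `[a,b]` with `2n` equal subintervals. -/
noncomputable def filonCos (a b k : ℝ) (n : ℕ) (ψ : ℝ → ℝ) : ℝ :=
  let h : ℝ := (b - a) / (2 * n)
  let θ : ℝ := k * h
  let x : ℕ → ℝ := fun r => a + r * h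
  let α : ℝ := 1 / θ + Real.sin θ * Real.cos θ / θ ^ 2 - 2 * Real.sin θ ^ 2 / θ ^ 3
  let β : ℝ := 2 * ((1 + Real.cos θ ^ 2) / θ ^ 2 - 2 * Real.sin θ * Real.cos θ / θ ^ 3)
  let γ : ℝ := 4 * (Real.sin θ / θ ^ 3 - Real.cos θ / θ ^ 2)
  let Ceven : ℝ := (∑ r ∈ Finset.range (n + 1), ψ (x (2 * r)) * Real.cos (k * x (2 * r)))
      - (ψ a * Real.cos (k * a) + ψ b * Real.cos (k * b)) / 2
  let Codd : ℝ := ∑ r ∈ Finset.range n, ψ (x (2 * r + 1)) * Real.cos (k * x (2 * r + 1))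
  h * (α * (ψ b * Real.sin (k * b) - ψ a * Real.sin (k * a)) + β * Ceven + γ * Codd)

lemma filon_panel (k m h c0 c1 c2 : ℝ) (hk : k ≠ 0) (hh : h ≠ 0) :
    ∫ t in (m - h)..(m + h), Real.sin (k * t) * (c2 * t ^ 2 + c1 * t + c0) =
    h * ((1 / (k*h) + Real.sin (k*h) * Real.cos (k*h) / (k*h) ^ 2
            - 2 * Real.sin (k*h) ^ 2 / (k*h) ^ 3)
          * ((c2*(m-h)^2+c1*(m-h)+c0) * Real.cos (k * (m - h))
             - (c2*(m+h)^2+c1*(m+h)+c0) * Real.cos (k * (m + h)))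
       + 2 * ((1 + Real.cos (k*h) ^ 2) / (k*h) ^ 2
            - 2 * Real.sin (k*h) * Real.cos (k*h) / (k*h) ^ 3)
          * (((c2*(m-h)^2+c1*(m-h)+c0) * Real.sin (k * (m - h))
             + (c2*(m+h)^2+c1*(m+h)+c0) * Real.sin (k * (m + h))) / 2)
       + 4 * (Real.sin (k*h) / (k*h) ^ 3 - Real.cos (k*h) / (k*h) ^ 2)
          * ((c2*m^2+c1*m+c0) * Real.sin (k * m))) := by
  have hF : ∀ t : ℝ, HasDerivAt
      (fun t => (2*c2/k^3 - (c2*t^2+c1*t+c0)/k) * Real.cos (k*t)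
                + (2*c2*t+c1)/k^2 * Real.sin (k*t))
      (Real.sin (k * t) * (c2 * t ^ 2 + c1 * t + c0)) t := by
    intro t
    have hkt : HasDerivAt (fun t : ℝ => k * t) k t := by
      simpa using (hasDerivAt_id t).const_mul k
    have hc : HasDerivAt (fun t : ℝ => Real.cos (k*t)) (-Real.sin (k*t) * k) t := hkt.cos
    have hs : HasDerivAt (fun t : ℝ => Real.sin (k*t)) (Real.cos (k*t) * k) t := hkt.sin
    have hq : HasDerivAt (fun t : ℝ => c2*t^2+c1*t+c0) (2*c2*t+c1) t := by
      have := (((hasDerivAt_pow 2 t).const_mul c2).add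
        (((hasDerivAt_id t).const_mul c1).add_const c0))
      refine (this.congr_deriv (by push_cast; ring)).congr_of_eventuallyEq
        (Filter.Eventually.of_forall fun y => ?_)
      simp only [Pi.add_apply, id]; ring
    have hP : HasDerivAt (fun t : ℝ => 2*c2/k^3 - (c2*t^2+c1*t+c0)/k) (-((2*c2*t+c1)/k)) t :=
      (hq.div_const k).const_sub _
    have hQ : HasDerivAt (fun t : ℝ => (2*c2*t+c1)/k^2) ((2*c2)/k^2) t := by
      have : HasDerivAt (fun t : ℝ => 2*c2*t+c1) (2*c2) t := by
        simpa using ((hasDerivAt_id t).const_mul (2*c2)).add_const c1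
      exact this.div_const _
    have := (hP.mul hc).add (hQ.mul hs)
    refine (this.congr_deriv ?_).congr_of_eventuallyEq (Filter.Eventually.of_forall fun y => rfl)
    field_simp
    ring
  rw [intervalIntegral.integral_eq_sub_of_hasDerivAt (fun t _ => hF t)
    (by apply Continuous.intervalIntegrable; continuity)]
  have e1 : k * (m + h) = k * m + k * h := by ring
  have e2 : k * (m - h) = k * m - k * h := by ring
  rw [e1, e2, Real.cos_add, Real.sin_add, Real.cos_sub, Real.sin_sub]
  have pyth : Real.sin (k*h)^2 + Real.cos (k*h)^2 = 1 := Real.sin_sq_add_cos_sq _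
  generalize Real.sin (k*m) = sm
  generalize Real.cos (k*m) = cm
  obtain ⟨sh, hsh⟩ : ∃ s, Real.sin (k*h) = s := ⟨_, rfl⟩
  obtain ⟨ch, hch⟩ : ∃ s, Real.cos (k*h) = s := ⟨_, rfl⟩
  rw [hsh, hch] at pyth ⊢
  field_simp
  linear_combination (-2*h*k*m^2*c2*sm*ch - 2*h*k*m*c1*sm*ch - 2*h^3*k*c2*sm*ch - 2*h*k*c0*sm*ch + 4*m^2*c2*sm*sh + 4*m*c1*sm*sh + 4*h^2*c2*sm*sh + 4*c0*sm*sh) * pyth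


theorem filonSin_eq_integral_of_piecewise_quadratic_interpolant
    (a b k : ℝ) (hab : a < b) (hk : 0 < k) (n : ℕ) (hn : 1 ≤ n)
    (h : ℝ) (hh : h = (b - a) / (2 * n))
    (x : ℕ → ℝ) (hx : ∀ r : ℕ, x r = a + r * h)
    (ψ p : ℝ → ℝ)
    (hp : ∀ r : ℕ, r < n → ∃ c0 c1 c2 : ℝ,
      (∀ t ∈ Set.Icc (x (2 * r)) (x (2 * r + 2)), p t = c2 * t ^ 2 + c1 * t + c0) ∧
      c2 * (x (2 * r)) ^ 2 + c1 * (x (2 * r)) + c0 = ψ (x (2 * r)) ∧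
      c2 * (x (2 * r + 1)) ^ 2 + c1 * (x (2 * r + 1)) + c0 = ψ (x (2 * r + 1)) ∧
      c2 * (x (2 * r + 2)) ^ 2 + c1 * (x (2 * r + 2)) + c0 = ψ (x (2 * r + 2))) :
    filonSin a b k n ψ = ∫ t in a..b, Real.sin (k * t) * p t := by
  have hnR : (0:ℝ) < n := by exact_mod_cast Nat.pos_of_ne_zero (by omega)
  have hh0 : 0 < h := by rw [hh]; exact div_pos (by linarith) (by positivity)
  have hkne : k ≠ 0 := ne_of_gt hk
  have hhne : h ≠ 0 := ne_of_gt hh0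
  have hx00 : x (2*0) = a := by rw [hx]; simp
  have hx2n : x (2*n) = b := by
    rw [hx, hh]; push_cast; field_simp; ring
  -- panel identity
  have hpanel : ∀ r ∈ Finset.range n,
      (∫ t in x (2*r)..x (2*r+2), Real.sin (k*t) * p t) =
      h * ((1 / (k*h) + Real.sin (k*h) * Real.cos (k*h) / (k*h) ^ 2
              - 2 * Real.sin (k*h) ^ 2 / (k*h) ^ 3)
            * (ψ (x (2*r)) * Real.cos (k * (x (2*r)))
               - ψ (x (2*r+2)) * Real.cos (k * (x (2*r+2))))
         + 2 * ((1 + Real.cos (k*h) ^ 2) / (k*h) ^ 2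
              - 2 * Real.sin (k*h) * Real.cos (k*h) / (k*h) ^ 3)
            * ((ψ (x (2*r)) * Real.sin (k * (x (2*r)))
               + ψ (x (2*r+2)) * Real.sin (k * (x (2*r+2)))) / 2)
         + 4 * (Real.sin (k*h) / (k*h) ^ 3 - Real.cos (k*h) / (k*h) ^ 2)
            * (ψ (x (2*r+1)) * Real.sin (k * (x (2*r+1))))) := by
    intro r hr
    obtain ⟨c0, c1, c2, hpt, e0, e1, e2⟩ := hp r (Finset.mem_range.mp hr)
    have hm1 : x (2*r) = x (2*r+1) - h := by simp only [hx]; push_cast; ring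
    have hm2 : x (2*r+2) = x (2*r+1) + h := by simp only [hx]; push_cast; ring
    have hle : x (2*r) ≤ x (2*r+2) := by rw [hm1, hm2]; linarith
    have hcong : (∫ t in x (2*r)..x (2*r+2), Real.sin (k*t) * p t)
        = ∫ t in x (2*r)..x (2*r+2), Real.sin (k*t) * (c2*t^2 + c1*t + c0) := by
      apply intervalIntegral.integral_congr
      intro t ht
      rw [Set.uIcc_of_le hle] at ht
      dsimp only
      rw [hpt t ht]
    rw [hcong]
    rw [hm1] at e0 ⊢
    rw [hm2] at e2 ⊢
    rw [filon_panel k (x (2*r+1)) h c0 c1 c2 hkne hhne, e0, e1, e2]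
  -- integrability on each panel
  have hint : ∀ i < n, IntervalIntegrable (fun t => Real.sin (k*t) * p t)
      MeasureTheory.volume (x (2*i)) (x (2*(i+1))) := by
    intro i hi
    obtain ⟨c0, c1, c2, hpt, -, -, -⟩ := hp i hi
    have h22 : x (2*(i+1)) = x (2*i+2) := congrArg x (by ring)
    rw [h22]
    have hle : x (2*i) ≤ x (2*i+2) := by
      simp only [hx]; push_cast; nlinarith [hh0]
    apply ContinuousOn.intervalIntegrable
    rw [Set.uIcc_of_le hle]
    apply ContinuousOn.congr
      (f := fun t : ℝ => Real.sin (k*t) * (c2*t^2 + c1*t + c0))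
    · exact Continuous.continuousOn (by fun_prop)
    · intro t ht; dsimp only; rw [hpt t ht]
  -- sum of adjacent integrals
  have hadj : ∑ i ∈ Finset.range n, ∫ t in x (2*i)..x (2*(i+1)), Real.sin (k*t) * p t
      = ∫ t in x (2*0)..x (2*n), Real.sin (k*t) * p t :=
    intervalIntegral.sum_integral_adjacent_intervals hint
  have h22 : ∀ i : ℕ, x (2*(i+1)) = x (2*i+2) := fun i => congrArg x (by ring)
  have hsplit : (∫ t in a..b, Real.sin (k*t) * p t)
      = ∑ r ∈ Finset.range n, ∫ t in x (2*r)..x (2*r+2), Real.sin (k*t) * p t := by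
    rw [← hx00, ← hx2n, ← hadj]
    exact Finset.sum_congr rfl (fun i _ => by rw [h22 i])
  rw [hsplit, Finset.sum_congr rfl hpanel]
  -- now pure algebra on the sums
  have tel : ∑ r ∈ Finset.range n,
      (ψ (x (2*r)) * Real.cos (k * (x (2*r))) - ψ (x (2*(r+1))) * Real.cos (k * (x (2*(r+1)))))
      = ψ (x (2*0)) * Real.cos (k * (x (2*0))) - ψ (x (2*n)) * Real.cos (k * (x (2*n))) :=
    Finset.sum_range_sub' (fun i => ψ (x (2*i)) * Real.cos (k * (x (2*i)))) n
  have gsh : ∑ r ∈ Finset.range n, ψ (x (2*(r+1))) * Real.sin (k * (x (2*(r+1))))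
      = (∑ r ∈ Finset.range (n+1), ψ (x (2*r)) * Real.sin (k * (x (2*r))))
        - ψ (x (2*0)) * Real.sin (k * (x (2*0))) := by
    rw [Finset.sum_range_succ' (fun i => ψ (x (2*i)) * Real.sin (k * (x (2*i)))) n]
    ring
  have gsn : ∑ r ∈ Finset.range n, ψ (x (2*r)) * Real.sin (k * (x (2*r)))
      = (∑ r ∈ Finset.range (n+1), ψ (x (2*r)) * Real.sin (k * (x (2*r))))
        - ψ (x (2*n)) * Real.sin (k * (x (2*n))) := by
    rw [Finset.sum_range_succ (fun i => ψ (x (2*i)) * Real.sin (k * (x (2*i)))) n]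
    ring
  -- unfold filonSin
  have hfil : filonSin a b k n ψ
      = h * ((1 / (k*h) + Real.sin (k*h) * Real.cos (k*h) / (k*h) ^ 2
              - 2 * Real.sin (k*h) ^ 2 / (k*h) ^ 3)
            * (ψ a * Real.cos (k * a) - ψ b * Real.cos (k * b))
         + 2 * ((1 + Real.cos (k*h) ^ 2) / (k*h) ^ 2
              - 2 * Real.sin (k*h) * Real.cos (k*h) / (k*h) ^ 3)
            * ((∑ r ∈ Finset.range (n+1), ψ (x (2*r)) * Real.sin (k * (x (2*r))))
               - (ψ a * Real.sin (k * a) + ψ b * Real.sin (k * b)) / 2)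
         + 4 * (Real.sin (k*h) / (k*h) ^ 3 - Real.cos (k*h) / (k*h) ^ 2)
            * ∑ r ∈ Finset.range n, ψ (x (2*r+1)) * Real.sin (k * (x (2*r+1)))) := by
    simp only [filonSin, ← hh, ← hx]
  rw [hfil]
  -- transform each summand and sum up
  have hsummand : ∀ r ∈ Finset.range n,
      h * ((1 / (k*h) + Real.sin (k*h) * Real.cos (k*h) / (k*h) ^ 2
              - 2 * Real.sin (k*h) ^ 2 / (k*h) ^ 3)
            * (ψ (x (2*r)) * Real.cos (k * (x (2*r)))
               - ψ (x (2*r+2)) * Real.cos (k * (x (2*r+2))))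
         + 2 * ((1 + Real.cos (k*h) ^ 2) / (k*h) ^ 2
              - 2 * Real.sin (k*h) * Real.cos (k*h) / (k*h) ^ 3)
            * ((ψ (x (2*r)) * Real.sin (k * (x (2*r)))
               + ψ (x (2*r+2)) * Real.sin (k * (x (2*r+2)))) / 2)
         + 4 * (Real.sin (k*h) / (k*h) ^ 3 - Real.cos (k*h) / (k*h) ^ 2)
            * (ψ (x (2*r+1)) * Real.sin (k * (x (2*r+1)))))
      = (h * (1 / (k*h) + Real.sin (k*h) * Real.cos (k*h) / (k*h) ^ 2
              - 2 * Real.sin (k*h) ^ 2 / (k*h) ^ 3))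
          * (ψ (x (2*r)) * Real.cos (k * (x (2*r)))
             - ψ (x (2*(r+1))) * Real.cos (k * (x (2*(r+1)))))
        + (h * ((1 + Real.cos (k*h) ^ 2) / (k*h) ^ 2
              - 2 * Real.sin (k*h) * Real.cos (k*h) / (k*h) ^ 3))
          * (ψ (x (2*r)) * Real.sin (k * (x (2*r)))
             + ψ (x (2*(r+1))) * Real.sin (k * (x (2*(r+1)))))
        + (h * 4 * (Real.sin (k*h) / (k*h) ^ 3 - Real.cos (k*h) / (k*h) ^ 2))
          * (ψ (x (2*r+1)) * Real.sin (k * (x (2*r+1)))) := by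
    intro r _
    rw [h22 r]
    ring
  rw [Finset.sum_congr rfl hsummand]
  simp only [Finset.sum_add_distrib, ← Finset.mul_sum, Finset.sum_sub_distrib]
  rw [show (∑ r ∈ Finset.range n, ψ (x (2*r)) * Real.cos (k * (x (2*r))))
      - ∑ r ∈ Finset.range n, ψ (x (2*(r+1))) * Real.cos (k * (x (2*(r+1))))
      = ∑ r ∈ Finset.range n,
        (ψ (x (2*r)) * Real.cos (k * (x (2*r)))
          - ψ (x (2*(r+1))) * Real.cos (k * (x (2*(r+1))))) from
    (Finset.sum_sub_distrib _ _).symm, tel, gsh, gsn, hx00, hx2n]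
  ring
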